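/- Let q be a prime power, and let U be an SC-representation of an (n1, N1, d1, k)_q constant dimension code (a set of N1 full-rank k×n1 matrices over F_q with pairwise distinct row spaces, whose row spaces have pairwise subspace distance at least d1). Let Q ⊆ F_q^{k×n2} be a set of N2 matrices such that rank(A − B) ≥ d2 for all distinct A, B ∈ Q. Then W1 = { rowspace(U | Q) : U ∈ U, Q ∈ Q } is an (n1 + n2, N1·N2, min{d1, 2·d2}, k)_q constant dimension code; in particular the N1·N2 row spaces rowspace(U | Q) are pairwise distinct and have pairwise subspace distance at least min{d1, 2·d2}. -/
import Mathlib


open Module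

/-- The row space of a matrix: the subspace spanned by its rows. -/
noncomputable def rowSpace {F : Type*} [Field F] {k n : ℕ} (M : Matrix (Fin k) (Fin n) F) :
    Submodule F (Fin n → F) := LinearMap.range M.vecMulLinear

/-- The subspace distance `d_S(U, W) = dim(U + W) − dim(U ∩ W)`. -/
noncomputable def subspaceDist {F : Type*} [Field F] {n : ℕ}
    (U W : Submodule F (Fin n → F)) : ℕ :=
  finrank F ↥(U ⊔ W) - finrank F ↥(U ⊓ W)

/-- Horizontal concatenation `(A | B)` of two matrices with the same number of rows. -/
def hcat {F : Type*} {k n1 n2 : ℕ} (A : Matrix (Fin k) (Fin n1) F)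
    (B : Matrix (Fin k) (Fin n2) F) : Matrix (Fin k) (Fin (n1 + n2)) F :=
  Matrix.of fun i => Fin.append (A i) (B i)

/-- `S` is an SC-representation of an `(n, N, d, k)_q` constant dimension code: a set of `N`
full-rank `k×n` matrices whose row spaces are pairwise distinct and have pairwise subspace
distance at least `d`. -/
def IsSCRepOfCDC {F : Type*} [Field F] {k n : ℕ}
    (S : Finset (Matrix (Fin k) (Fin n) F)) (N d : ℕ) : Prop :=
  S.card = N ∧ (∀ M ∈ S, M.rank = k) ∧
  (∀ M1 ∈ S, ∀ M2 ∈ S, M1 ≠ M2 → rowSpace M1 ≠ rowSpace M2) ∧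
  (∀ M1 ∈ S, ∀ M2 ∈ S, M1 ≠ M2 → d ≤ subspaceDist (rowSpace M1) (rowSpace M2))

section helpers
variable {F : Type*} [Field F] {k n n1 n2 : ℕ}

lemma finrank_rowSpace (M : Matrix (Fin k) (Fin n) F) :
    finrank F ↥(rowSpace M) = M.rank := by
  rw [rowSpace, ← Matrix.mulVecLin_transpose, ← Matrix.rank_transpose]
  rfl

lemma rank_zero_imp (M : Matrix (Fin k) (Fin n) F) (h : M.rank = 0) : M = 0 := by
  have h0 : LinearMap.range M.mulVecLin = ⊥ := Submodule.finrank_eq_zero.mp h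
  have h1 : M.mulVecLin = 0 := LinearMap.range_eq_bot.mp h0
  ext i j
  have := congrFun (LinearMap.congr_fun h1 (Pi.single j 1)) i
  simpa [Matrix.mulVecLin_apply] using this

lemma vecMulLinear_inj (M : Matrix (Fin k) (Fin n) F) (h : M.rank = k) :
    Function.Injective M.vecMulLinear := by
  rw [← LinearMap.ker_eq_bot]
  have h1 := LinearMap.finrank_range_add_finrank_ker M.vecMulLinear
  have h2 : finrank F ↥(LinearMap.range M.vecMulLinear) = k := by
    rw [show LinearMap.range M.vecMulLinear = rowSpace M from rfl, finrank_rowSpace, h]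
  have h3 : finrank F (Fin k → F) = k := by simp
  rw [h2, h3] at h1
  have h4 : finrank F ↥(LinearMap.ker M.vecMulLinear) = 0 := by omega
  exact Submodule.finrank_eq_zero.mp h4

lemma hcat_compL (A : Matrix (Fin k) (Fin n1) F) (B : Matrix (Fin k) (Fin n2) F) :
    (LinearMap.funLeft F F (Fin.castAdd n2)).comp (hcat A B).vecMulLinear = A.vecMulLinear := by
  apply LinearMap.ext; intro v
  funext i
  simp [hcat, Matrix.vecMul, dotProduct, Fin.append_left, LinearMap.funLeft_apply]

lemma hcat_compR (A : Matrix (Fin k) (Fin n1) F) (B : Matrix (Fin k) (Fin n2) F) :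
    (LinearMap.funLeft F F (Fin.natAdd n1)).comp (hcat A B).vecMulLinear = B.vecMulLinear := by
  apply LinearMap.ext; intro v
  funext i
  simp [hcat, Matrix.vecMul, dotProduct, Fin.append_right, LinearMap.funLeft_apply]

lemma rowSpace_hcat_mapL (A : Matrix (Fin k) (Fin n1) F) (B : Matrix (Fin k) (Fin n2) F) :
    (rowSpace (hcat A B)).map (LinearMap.funLeft F F (Fin.castAdd n2)) = rowSpace A := by
  rw [rowSpace, rowSpace, ← LinearMap.range_comp, hcat_compL]

lemma hcat_inj (A : Matrix (Fin k) (Fin n1) F) (B : Matrix (Fin k) (Fin n2) F)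
    (hA : A.rank = k) : Function.Injective (hcat A B).vecMulLinear := by
  intro v w hvw
  apply vecMulLinear_inj A hA
  have h2 : ((LinearMap.funLeft F F (Fin.castAdd n2)).comp (hcat A B).vecMulLinear) v
      = ((LinearMap.funLeft F F (Fin.castAdd n2)).comp (hcat A B).vecMulLinear) w := by
    simp only [LinearMap.comp_apply, hvw]
  rwa [hcat_compL] at h2

lemma finrank_rowSpace_hcat (A : Matrix (Fin k) (Fin n1) F) (B : Matrix (Fin k) (Fin n2) F)
    (hA : A.rank = k) : finrank F ↥(rowSpace (hcat A B)) = k := by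
  rw [rowSpace, LinearMap.finrank_range_of_inj (hcat_inj A B hA)]
  simp

/-- Key pairwise lemma. -/
lemma key_pair (d1 d2 : ℕ)
    (U1 U2 : Matrix (Fin k) (Fin n1) F) (Q1 Q2 : Matrix (Fin k) (Fin n2) F)
    (hrk1 : U1.rank = k) (hrk2 : U2.rank = k)
    (hUne : U1 ≠ U2 → rowSpace U1 ≠ rowSpace U2)
    (hUd : U1 ≠ U2 → d1 ≤ subspaceDist (rowSpace U1) (rowSpace U2))
    (hQd : Q1 ≠ Q2 → d2 ≤ (Q1 - Q2).rank)
    (hpair : (U1, Q1) ≠ (U2, Q2)) :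
    rowSpace (hcat U1 Q1) ≠ rowSpace (hcat U2 Q2) ∧
      min d1 (2 * d2) ≤ subspaceDist (rowSpace (hcat U1 Q1)) (rowSpace (hcat U2 Q2)) := by
  set W1 := rowSpace (hcat U1 Q1) with hW1
  set W2 := rowSpace (hcat U2 Q2) with hW2
  have e1 : finrank F ↥W1 = k := finrank_rowSpace_hcat U1 Q1 hrk1
  have e2 : finrank F ↥W2 = k := finrank_rowSpace_hcat U2 Q2 hrk2
  have hsupinf := Submodule.finrank_sup_add_finrank_inf_eq W1 W2
  rw [e1, e2] at hsupinf
  by_cases hU : U1 = U2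
  · subst hU
    have hQ : Q1 ≠ Q2 := by
      intro h; exact hpair (by rw [h])
    have hrQ := hQd hQ
    -- kernel dimension
    have hker : finrank F ↥(LinearMap.ker (Q1 - Q2).vecMulLinear) + (Q1 - Q2).rank = k := by
      have h1 := LinearMap.finrank_range_add_finrank_ker (Q1 - Q2).vecMulLinear
      have h2 : finrank F ↥(LinearMap.range (Q1 - Q2).vecMulLinear) = (Q1 - Q2).rank := by
        rw [show LinearMap.range (Q1 - Q2).vecMulLinear = rowSpace (Q1 - Q2) from rfl,
          finrank_rowSpace]
      have h3 : finrank F (Fin k → F) = k := by simp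
      rw [h2, h3] at h1
      omega
    -- intersection is contained in image of kernel
    have hle : W1 ⊓ W2 ≤
        (LinearMap.ker (Q1 - Q2).vecMulLinear).map (hcat U1 Q1).vecMulLinear := by
      rintro x ⟨hx1, hx2⟩
      obtain ⟨v, hv⟩ : ∃ v, (hcat U1 Q1).vecMulLinear v = x := hx1
      obtain ⟨w, hw⟩ : ∃ w, (hcat U1 Q2).vecMulLinear w = x := hx2
      have hvw : v = w := by
        apply vecMulLinear_inj U1 hrk1
        have h5 : ((LinearMap.funLeft F F (Fin.castAdd n2)).comp
              (hcat U1 Q1).vecMulLinear) v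
            = ((LinearMap.funLeft F F (Fin.castAdd n2)).comp
              (hcat U1 Q2).vecMulLinear) w := by
          simp only [LinearMap.comp_apply, hv, hw]
        rwa [hcat_compL, hcat_compL] at h5
      refine ⟨v, ?_, hv⟩
      show (Q1 - Q2).vecMulLinear v = 0
      have h6 : ((LinearMap.funLeft F F (Fin.natAdd n1)).comp
            (hcat U1 Q1).vecMulLinear) v
          = ((LinearMap.funLeft F F (Fin.natAdd n1)).comp
            (hcat U1 Q2).vecMulLinear) w := by
        simp only [LinearMap.comp_apply, hv, hw]
      rw [hcat_compR, hcat_compR] at h6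
      simp only [Matrix.vecMulLinear_apply] at h6 ⊢
      rw [hvw] at h6
      rw [Matrix.vecMul_sub, hvw, h6, sub_self]
    have hinterle : finrank F ↥(W1 ⊓ W2)
        ≤ finrank F ↥(LinearMap.ker (Q1 - Q2).vecMulLinear) :=
      le_trans (Submodule.finrank_mono hle) (Submodule.finrank_map_le _ _)
    constructor
    · intro hEq
      have hk : finrank F ↥(W1 ⊓ W2) = k := by rw [hEq, inf_idem, e2]
      have hr0 : (Q1 - Q2).rank = 0 := by omega
      exact hQ (sub_eq_zero.mp (rank_zero_imp _ hr0))
    · have hmin := min_le_right d1 (2 * d2)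
      rw [subspaceDist]
      omega
  · have hVne := hUne hU
    have hVd := hUd hU
    rw [subspaceDist] at hVd
    have hV1 : finrank F ↥(rowSpace U1) = k := by rw [finrank_rowSpace, hrk1]
    have hV2 : finrank F ↥(rowSpace U2) = k := by rw [finrank_rowSpace, hrk2]
    have hVsupinf := Submodule.finrank_sup_add_finrank_inf_eq (rowSpace U1) (rowSpace U2)
    rw [hV1, hV2] at hVsupinf
    have hmap1 : W1.map (LinearMap.funLeft F F (Fin.castAdd n2)) = rowSpace U1 :=
      rowSpace_hcat_mapL U1 Q1
    have hmap2 : W2.map (LinearMap.funLeft F F (Fin.castAdd n2)) = rowSpace U2 :=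
      rowSpace_hcat_mapL U2 Q2
    have hsub : ∀ x ∈ W1 ⊓ W2,
        (LinearMap.funLeft F F (Fin.castAdd n2)) x ∈ rowSpace U1 ⊓ rowSpace U2 := by
      intro x hx
      exact ⟨hmap1 ▸ Submodule.mem_map_of_mem hx.1, hmap2 ▸ Submodule.mem_map_of_mem hx.2⟩
    have hfinj : Function.Injective
        ((LinearMap.funLeft F F (Fin.castAdd n2)).restrict hsub) := by
      intro a b hab
      have h0 : (LinearMap.funLeft F F (Fin.castAdd n2)) a.1
          = (LinearMap.funLeft F F (Fin.castAdd n2)) b.1 := by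
        simpa [LinearMap.restrict_apply, Subtype.ext_iff] using hab
      have ha1 : (a : Fin (n1 + n2) → F) ∈ W1 := a.2.1
      have hb1 : (b : Fin (n1 + n2) → F) ∈ W1 := b.2.1
      obtain ⟨va, hva⟩ : ∃ v, (hcat U1 Q1).vecMulLinear v = (a : Fin (n1 + n2) → F) := ha1
      obtain ⟨vb, hvb⟩ : ∃ v, (hcat U1 Q1).vecMulLinear v = (b : Fin (n1 + n2) → F) := hb1
      have hvab : va = vb := by
        apply vecMulLinear_inj U1 hrk1
        have h5 : ((LinearMap.funLeft F F (Fin.castAdd n2)).comp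
              (hcat U1 Q1).vecMulLinear) va
            = ((LinearMap.funLeft F F (Fin.castAdd n2)).comp
              (hcat U1 Q1).vecMulLinear) vb := by
          simp only [LinearMap.comp_apply, hva, hvb, h0]
        rwa [hcat_compL] at h5
      have hfin : (hcat U1 Q1).vecMulLinear va = (hcat U1 Q1).vecMulLinear vb := by
        rw [hvab]
      rw [hva, hvb] at hfin
      exact Subtype.ext hfin
    have hWVle : finrank F ↥(W1 ⊓ W2) ≤ finrank F ↥(rowSpace U1 ⊓ rowSpace U2) :=
      LinearMap.finrank_le_finrank_of_injective hfinj
    constructor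
    · intro hEq
      exact hVne (by rw [← hmap1, ← hmap2, hEq])
    · have hmin := min_le_left d1 (2 * d2)
      rw [subspaceDist]
      omega

end helpers

/-- The linkage construction: from an SC-representation `𝒰` of an `(n1, N1, d1, k)_q` CDC
and a rank-metric code `𝒬 ⊆ F_q^{k×n2}` of size `N2` with minimum rank distance `d2`, the
set `W1 = { rowspace(U | Q) : U ∈ 𝒰, Q ∈ 𝒬 }` is an
`(n1 + n2, N1·N2, min{d1, 2·d2}, k)_q` constant dimension code. -/
theorem linkage_construction (q k n1 n2 N1 N2 d1 d2 : ℕ) (hq : IsPrimePow q)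
    (F : Type*) [Field F] [Fintype F] (hcard : Fintype.card F = q)
    (𝒰 : Finset (Matrix (Fin k) (Fin n1) F)) (h𝒰 : IsSCRepOfCDC 𝒰 N1 d1)
    (𝒬 : Finset (Matrix (Fin k) (Fin n2) F)) (h𝒬card : 𝒬.card = N2)
    (h𝒬dist : ∀ A ∈ 𝒬, ∀ B ∈ 𝒬, A ≠ B → d2 ≤ (A - B).rank) :
    (∀ U ∈ 𝒰, ∀ Q ∈ 𝒬, finrank F ↥(rowSpace (hcat U Q)) = k) ∧
    ((@Finset.image _ _ (Classical.decEq _)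
      (fun p : Matrix (Fin k) (Fin n1) F × Matrix (Fin k) (Fin n2) F =>
        rowSpace (hcat p.1 p.2)) (𝒰 ×ˢ 𝒬)).card = N1 * N2) ∧
    (∀ U1 ∈ 𝒰, ∀ Q1 ∈ 𝒬, ∀ U2 ∈ 𝒰, ∀ Q2 ∈ 𝒬, (U1, Q1) ≠ (U2, Q2) →
      rowSpace (hcat U1 Q1) ≠ rowSpace (hcat U2 Q2) ∧
      min d1 (2 * d2) ≤ subspaceDist (rowSpace (hcat U1 Q1)) (rowSpace (hcat U2 Q2))) := by
  obtain ⟨hN1, hrk, hne, hd⟩ := h𝒰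
  have key : ∀ U1 ∈ 𝒰, ∀ Q1 ∈ 𝒬, ∀ U2 ∈ 𝒰, ∀ Q2 ∈ 𝒬, (U1, Q1) ≠ (U2, Q2) →
      rowSpace (hcat U1 Q1) ≠ rowSpace (hcat U2 Q2) ∧
      min d1 (2 * d2) ≤ subspaceDist (rowSpace (hcat U1 Q1)) (rowSpace (hcat U2 Q2)) := by
    intro U1 hU1 Q1 hQ1 U2 hU2 Q2 hQ2 hpair
    exact key_pair d1 d2 U1 U2 Q1 Q2 (hrk U1 hU1) (hrk U2 hU2)
      (hne U1 hU1 U2 hU2) (hd U1 hU1 U2 hU2) (h𝒬dist Q1 hQ1 Q2 hQ2) hpair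
  refine ⟨fun U hU Q _ => finrank_rowSpace_hcat U Q (hrk U hU), ?_, key⟩
  have hinj : Set.InjOn
      (fun p : Matrix (Fin k) (Fin n1) F × Matrix (Fin k) (Fin n2) F =>
        rowSpace (hcat p.1 p.2)) ↑(𝒰 ×ˢ 𝒬) := by
    intro p hp p' hp' heq
    by_contra hne'
    rw [Finset.mem_coe, Finset.mem_product] at hp hp'
    exact (key p.1 hp.1 p.2 hp.2 p'.1 hp'.1 p'.2 hp'.2 (by simpa using hne')).1 heq
  have h1 := @Finset.card_image_of_injOn _ _ (𝒰 ×ˢ 𝒬) _ (Classical.decEq _) hinj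
  rw [h1, Finset.card_product, hN1, h𝒬card]
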